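/- Let $X$ be a Banach lattice with a quasi-interior point $e$, let $P\colon X\to X$ be a positive projection with $\alpha\,\mathrm{id}_X\le P$ for some $\alpha>0$, and let $Q$ be the band projection onto a $P$-invariant projection band $B$. Then $PQ(Pe)=Q(Pe)$, i.e., $Q(Pe)$ is a fixed point of $P$. -/

import Mathlib

private lemma nn_of_add_self_nn {α : Type*} [Lattice α] [AddCommGroup α]
    [CovariantClass α α (· + ·) (· ≤ ·)] {a : α} (h : 0 ≤ a + a) : 0 ≤ a := by
  have key : (a ⊓ 0) + (a ⊓ 0) = a ⊓ 0 := by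
    rw [inf_add, zero_add, add_inf, add_zero, inf_assoc, inf_left_idem]
    exact inf_of_le_right (inf_le_right.trans h)
  have h0 : a ⊓ 0 = 0 := by
    have : (a ⊓ 0) + (a ⊓ 0) = (a ⊓ 0) + 0 := by rw [key, add_zero]
    exact add_left_cancel this
  exact inf_eq_right.mp h0

private lemma nn_of_pow_two_nsmul_nn {α : Type*} [Lattice α] [AddCommGroup α]
    [CovariantClass α α (· + ·) (· ≤ ·)] (k : ℕ) {a : α} (h : 0 ≤ 2 ^ k • a) :
    0 ≤ a := by
  induction k with
  | zero => simpa using h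
  | succ n ih =>
    apply ih
    apply nn_of_add_self_nn
    rw [← add_nsmul, ← two_mul, ← pow_succ']
    exact h

private lemma real_smul_nonneg {X : Type*} [NormedAddCommGroup X] [Lattice X] [IsOrderedAddMonoid X]
    [HasSolidNorm X]
    [NormedSpace ℝ X] {c : ℝ} {x : X} (hc : 0 ≤ c) (hx : 0 ≤ x) : 0 ≤ c • x := by
  -- first: dyadic rationals
  have hdy : ∀ (m k : ℕ), 0 ≤ ((m : ℝ) / 2 ^ k) • x := by
    intro m k
    apply nn_of_pow_two_nsmul_nn k
    have key : (2 : ℕ) ^ k • (((m : ℝ) / 2 ^ k) • x) = (m : ℝ) • x := by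
      rw [← Nat.cast_smul_eq_nsmul ℝ, smul_smul]
      congr 1
      push_cast
      field_simp
    rw [key, Nat.cast_smul_eq_nsmul]
    exact nsmul_nonneg hx m
  -- approximate c by dyadics from below
  set f : ℕ → ℝ := fun n => (⌊c * 2 ^ n⌋₊ : ℝ) / 2 ^ n with hf
  have hpos : ∀ n : ℕ, (0 : ℝ) < 2 ^ n := fun n => by positivity
  have hub : ∀ n, f n ≤ c := by
    intro n
    rw [hf, div_le_iff₀ (hpos n)]
    exact Nat.floor_le (by positivity)
  have hlb : ∀ n, c - (1 / 2) ^ n ≤ f n := by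
    intro n
    rw [hf, le_div_iff₀ (hpos n)]
    have := (Nat.lt_floor_add_one (c * 2 ^ n)).le
    have h2 : (1 / 2 : ℝ) ^ n * 2 ^ n = 1 := by
      rw [← mul_pow]; norm_num
    nlinarith [hpos n]
  have htend : Filter.Tendsto f Filter.atTop (nhds c) := by
    have h1 : Filter.Tendsto (fun n : ℕ => c - (1 / 2 : ℝ) ^ n) Filter.atTop (nhds (c - 0)) :=
      Filter.Tendsto.const_sub c
        (tendsto_pow_atTop_nhds_zero_of_lt_one (by norm_num) (by norm_num))
    rw [sub_zero] at h1
    exact tendsto_of_tendsto_of_tendsto_of_le_of_le h1 tendsto_const_nhds hlb hub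
  have htend' : Filter.Tendsto (fun n => f n • x) Filter.atTop (nhds (c • x)) :=
    htend.smul_const x
  refine isClosed_nonneg.mem_of_tendsto htend' ?_
  filter_upwards with n
  exact hdy _ _

private lemma pos_of_disjoint_sum {X : Type*} [Lattice X] [AddCommGroup X]
    [CovariantClass X X (· + ·) (· ≤ ·)]
    {a b : X} (h : 0 ≤ a + b) (hd : |a| ⊓ |b| = 0) : 0 ≤ a := by
  rw [← negPart_eq_zero]
  have h1 : a⁻ ≤ |a| := by
    rw [negPart_def]
    exact sup_le (neg_le_abs a) (abs_nonneg a)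
  have h2 : a⁻ ≤ |b| := by
    rw [negPart_def]
    refine sup_le ?_ (abs_nonneg b)
    have hab : -a ≤ b := by
      have := add_le_add_left h (-a)
      simpa [← add_assoc] using this
    exact hab.trans (le_abs_self b)
  have h3 := le_inf h1 h2
  rw [hd] at h3
  exact le_antisymm h3 (negPart_nonneg a)

/-- Let `X` be a Banach lattice with quasi-interior point `e`, `P` a positive
projection with `α • id ≤ P` for some `α > 0`, and `Q` the band projection onto
a `P`-invariant projection band `B`. Then `Q (P e)` is a fixed point of `P`. -/
theorem stmt2 {X : Type*} [NormedAddCommGroup X] [Lattice X] [IsOrderedAddMonoid X]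
    [HasSolidNorm X] [NormedSpace ℝ X]
    [CompleteSpace X]
    (e : X) (he : 0 ≤ e)
    (hqi : Dense {x : X | ∃ c : ℝ, 0 ≤ c ∧ |x| ≤ c • e})
    (P : X →L[ℝ] X) (hproj : ∀ x, P (P x) = P x) (hpos : ∀ x : X, 0 ≤ x → 0 ≤ P x)
    (α : ℝ) (hα : 0 < α) (hdom : ∀ x : X, 0 ≤ x → α • x ≤ P x)
    (B : Submodule ℝ X) (hsolid : ∀ x y : X, |x| ≤ |y| → y ∈ B → x ∈ B)
    (hinv : ∀ x ∈ B, P x ∈ B)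
    (Q : X →L[ℝ] X)
    (hQmem : ∀ x : X, Q x ∈ B)
    (hQid : ∀ x ∈ B, Q x = x)
    (hQd : ∀ x : X, ∀ y ∈ B, |x - Q x| ⊓ |y| = 0) :
    P (Q (P e)) = Q (P e) := by
  set u : X := P e with hu_def
  have hu : 0 ≤ u := hpos e he
  have hPu : P u = u := hproj e
  -- u - Q u ≥ 0
  have hw0 : 0 ≤ u - Q u :=
    pos_of_disjoint_sum (b := Q u) (by simpa using hu) (hQd u (Q u) (hQmem u))
  -- z := P (u - Q u) ≥ 0
  set z : X := P (u - Q u) with hz_def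
  have hz : 0 ≤ z := hpos _ hw0
  -- Q z ≥ 0
  have hQz0 : 0 ≤ Q z := by
    refine pos_of_disjoint_sum (b := z - Q z) (by simpa using hz) ?_
    rw [inf_comm]
    exact hQd z (Q z) (hQmem z)
  -- compute Q z = Q u - P (Q u)
  have hPQu : P (Q u) ∈ B := hinv _ (hQmem u)
  have hQz_eq : Q z = Q u - P (Q u) := by
    have hz' : z = u - P (Q u) := by rw [hz_def, map_sub, hPu]
    rw [hz', map_sub, hQid _ hPQu]
  have hv0 : 0 ≤ Q u - P (Q u) := hQz_eq ▸ hQz0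
  have hPv : P (Q u - P (Q u)) = 0 := by rw [map_sub, hproj, sub_self]
  have hle : α • (Q u - P (Q u)) ≤ 0 := hPv ▸ hdom _ hv0
  have hge : 0 ≤ α • (Q u - P (Q u)) := real_smul_nonneg hα.le hv0
  have hsm : α • (Q u - P (Q u)) = 0 := le_antisymm hle hge
  have hv_eq : Q u - P (Q u) = 0 := by
    rcases smul_eq_zero.mp hsm with h | h
    · exact absurd h hα.ne'
    · exact h
  rw [sub_eq_zero] at hv_eq
  exact hv_eq.symm
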